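/- The inverse of the map (q,p) ↦ (q/|q|, −|q| p) from Q = {|q|² = 1 + |p|², q·p = 0} to TS^{2d+1} = {|q'| = 1, q'·p' = 0} is given by (q',p') ↦ (√(1+|p'|²)·q', −p'/√(1+|p'|²)). -/

import Mathlib

set_option maxHeartbeats 1000000

/-- The map (q,p) ↦ (q/|q|, −|q|p) from Q = {|q|² = 1 + |p|², q·p = 0} to
TS^{2d+1} = {|q'| = 1, q'·p' = 0} is bijective: it maps Q into TS^{2d+1},
is injective on Q, and every point of TS^{2d+1} has a (unique) preimage in Q. -/
theorem stmt12 (d : ℕ) :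
    Set.MapsTo
      (fun p : EuclideanSpace ℝ (Fin (2*d+2)) × EuclideanSpace ℝ (Fin (2*d+2)) =>
        (‖p.1‖⁻¹ • p.1, -(‖p.1‖ • p.2)))
      {p : EuclideanSpace ℝ (Fin (2*d+2)) × EuclideanSpace ℝ (Fin (2*d+2)) |
        ‖p.1‖ ^ 2 = 1 + ‖p.2‖ ^ 2 ∧ inner ℝ p.1 p.2 = (0 : ℝ)}
      {p : EuclideanSpace ℝ (Fin (2*d+2)) × EuclideanSpace ℝ (Fin (2*d+2)) |
        ‖p.1‖ = 1 ∧ inner ℝ p.1 p.2 = (0 : ℝ)} ∧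
    Set.InjOn
      (fun p : EuclideanSpace ℝ (Fin (2*d+2)) × EuclideanSpace ℝ (Fin (2*d+2)) =>
        (‖p.1‖⁻¹ • p.1, -(‖p.1‖ • p.2)))
      {p : EuclideanSpace ℝ (Fin (2*d+2)) × EuclideanSpace ℝ (Fin (2*d+2)) |
        ‖p.1‖ ^ 2 = 1 + ‖p.2‖ ^ 2 ∧ inner ℝ p.1 p.2 = (0 : ℝ)} ∧
    Set.SurjOn
      (fun p : EuclideanSpace ℝ (Fin (2*d+2)) × EuclideanSpace ℝ (Fin (2*d+2)) =>
        (‖p.1‖⁻¹ • p.1, -(‖p.1‖ • p.2)))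
      {p : EuclideanSpace ℝ (Fin (2*d+2)) × EuclideanSpace ℝ (Fin (2*d+2)) |
        ‖p.1‖ ^ 2 = 1 + ‖p.2‖ ^ 2 ∧ inner ℝ p.1 p.2 = (0 : ℝ)}
      {p : EuclideanSpace ℝ (Fin (2*d+2)) × EuclideanSpace ℝ (Fin (2*d+2)) |
        ‖p.1‖ = 1 ∧ inner ℝ p.1 p.2 = (0 : ℝ)} := by
  refine ⟨?_, ?_, ?_⟩
  · rintro x ⟨h1, h2⟩
    have hx1 : (1:ℝ) ≤ ‖x.1‖ := by nlinarith [norm_nonneg x.1, norm_nonneg x.2]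
    have hx0 : ‖x.1‖ ≠ 0 := by positivity
    constructor
    · show ‖‖x.1‖⁻¹ • x.1‖ = 1
      rw [norm_smul, norm_inv, norm_norm]
      field_simp
    · show inner ℝ (‖x.1‖⁻¹ • x.1) (-(‖x.1‖ • x.2)) = (0:ℝ)
      rw [inner_neg_right, real_inner_smul_left, real_inner_smul_right, h2]
      ring
  · rintro x ⟨hx1, hx2⟩ y ⟨hy1, hy2⟩ h
    have hxn : (1:ℝ) ≤ ‖x.1‖ := by nlinarith [norm_nonneg x.1, norm_nonneg x.2]
    have hyn : (1:ℝ) ≤ ‖y.1‖ := by nlinarith [norm_nonneg y.1, norm_nonneg y.2]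
    have h1 : ‖x.1‖⁻¹ • x.1 = ‖y.1‖⁻¹ • y.1 := congrArg Prod.fst h
    have h2 : -(‖x.1‖ • x.2) = -(‖y.1‖ • y.2) := congrArg Prod.snd h
    have h2' : ‖x.1‖ • x.2 = ‖y.1‖ • y.2 := by
      have := congrArg Neg.neg h2; simpa using this
    have hn2 : ‖x.1‖ * ‖x.2‖ = ‖y.1‖ * ‖y.2‖ := by
      have := congrArg norm h2'
      simpa [norm_smul, abs_of_nonneg (norm_nonneg x.1),
        abs_of_nonneg (norm_nonneg y.1)] using this
    have hq : ‖x.1‖ ^ 2 * ‖x.2‖ ^ 2 = ‖y.1‖ ^ 2 * ‖y.2‖ ^ 2 := by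
      have := congrArg (fun r : ℝ => r ^ 2) hn2
      simpa [mul_pow] using this
    have hsq : ‖x.1‖ ^ 2 = ‖y.1‖ ^ 2 := by
      nlinarith [hq, hx1, hy1, sq_nonneg ‖x.2‖, sq_nonneg ‖y.2‖,
        sq_nonneg (‖x.2‖ ^ 2 - ‖y.2‖ ^ 2), sq_nonneg (‖x.2‖ ^ 2 + ‖y.2‖ ^ 2)]
    have heq : ‖x.1‖ = ‖y.1‖ := by nlinarith [hsq, hxn, hyn]
    have hx0 : ‖x.1‖ ≠ 0 := by positivity
    have hy0 : ‖y.1‖ ≠ 0 := by positivity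
    have e1 : x.1 = y.1 := by
      have := congrArg (fun v => ‖x.1‖ • v) h1
      simpa [heq, smul_smul, mul_inv_cancel₀ hy0] using this
    have e2 : x.2 = y.2 := by
      have := congrArg (fun v => ‖x.1‖⁻¹ • v) h2'
      simpa [heq, smul_smul, inv_mul_cancel₀ hy0] using this
    exact Prod.ext e1 e2
  · rintro y ⟨h1, h2⟩
    set t : ℝ := ‖y.2‖ with ht
    have hD : (0:ℝ) ≤ 1 + 4 * t ^ 2 := by positivity
    have hDs : Real.sqrt (1 + 4 * t ^ 2) ^ 2 = 1 + 4 * t ^ 2 := Real.sq_sqrt hD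
    have hD1 : (1:ℝ) ≤ Real.sqrt (1 + 4 * t ^ 2) := by
      have := Real.sqrt_le_sqrt (show (1:ℝ) ≤ 1 + 4 * t ^ 2 by nlinarith [sq_nonneg t])
      rwa [Real.sqrt_one] at this
    set u : ℝ := (1 + Real.sqrt (1 + 4 * t ^ 2)) / 2 with hu
    have hu1 : (1:ℝ) ≤ u := by rw [hu]; linarith
    have hut : u ^ 2 - u = t ^ 2 := by
      rw [hu]; field_simp; nlinarith [hDs]
    set s : ℝ := Real.sqrt u with hs
    have hs2 : s ^ 2 = u := Real.sq_sqrt (by linarith)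
    have hs1 : (1:ℝ) ≤ s := by
      have := Real.sqrt_le_sqrt hu1
      rwa [Real.sqrt_one] at this
    have hs0 : s ≠ 0 := by positivity
    refine ⟨(s • y.1, -(s⁻¹ • y.2)), ⟨?_, ?_⟩, ?_⟩
    · show ‖s • y.1‖ ^ 2 = 1 + ‖-(s⁻¹ • y.2)‖ ^ 2
      have hns : ‖s • y.1‖ = s := by
        rw [norm_smul, h1, Real.norm_eq_abs, abs_of_nonneg (by linarith : (0:ℝ) ≤ s)]; ring
      have hnp : ‖-(s⁻¹ • y.2)‖ = s⁻¹ * t := by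
        rw [norm_neg, norm_smul, Real.norm_eq_abs,
          abs_of_nonneg (by positivity : (0:ℝ) ≤ s⁻¹)]
      rw [hns, hnp]
      have hu0 : u ≠ 0 := by positivity
      field_simp [hs2]
      nlinarith [hut, hs2]
    · show inner ℝ (s • y.1) (-(s⁻¹ • y.2)) = (0:ℝ)
      rw [inner_neg_right, real_inner_smul_left, real_inner_smul_right, h2]
      ring
    · show (fun p : EuclideanSpace ℝ (Fin (2*d+2)) × EuclideanSpace ℝ (Fin (2*d+2)) =>
        (‖p.1‖⁻¹ • p.1, -(‖p.1‖ • p.2))) (s • y.1, -(s⁻¹ • y.2)) = y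
      have hns : ‖s • y.1‖ = s := by
        rw [norm_smul, h1, Real.norm_eq_abs, abs_of_nonneg (by linarith : (0:ℝ) ≤ s)]; ring
      simp only [hns]
      have e1 : s⁻¹ • s • y.1 = y.1 := by
        rw [smul_smul, inv_mul_cancel₀ hs0, one_smul]
      have e2 : -(s • -(s⁻¹ • y.2)) = y.2 := by
        rw [smul_neg, neg_neg, smul_smul, mul_inv_cancel₀ hs0, one_smul]
      rw [e1, e2]
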